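/- Let k ≥ 1, t ≥ 1 and n ≥ 1, let 0 ≤ r ≤ kt, and let a_0, a_1, …, a_t, x be independent variables over a field of characteristic 0. Then Tr( (Π_{r,t}^{[k]}(a_0, a_1·x, a_2·x^2, …, a_t·x^t))^n ) = x^{rn} · Tr( (Π_{r,t}^{[k]}(a_0, a_1, …, a_t))^n ). -/

import Mathlib

open scoped BigOperators Classical

/-- The index set `G_{r,t}^{[k]}`: vectors `(l_1, …, l_t)` with `0 ≤ l_i ≤ k` and
`l_1 + ⋯ + l_t = r`. -/
def GIdx (k r t : ℕ) := {l : Fin t → Fin (k + 1) // (∑ i, (l i : ℕ)) = r}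

noncomputable instance (k r t : ℕ) : Fintype (GIdx k r t) := by
  unfold GIdx; infer_instance

instance (k r t : ℕ) : DecidableEq (GIdx k r t) := by
  unfold GIdx; infer_instance

/-- The square matrix `Π_{r,t}^{[k]}(a_0, a_1, …, a_t)`, with rows and columns indexed by
`G_{r,t}^{[k]}`.  For `t ≥ 1` the `(α,β)` entry, for `α = (l_1, …, l_t)`, equals
`k!·C(k, l_t+p_1+⋯+p_{t−1})·C(l_1,p_1)⋯C(l_{t−1},p_{t−1})·a_0^{k−l_t−Σp}·a_1^{p_1}⋯a_{t−1}^{p_{t−1}}·a_t^{l_t}`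
if `β = (l_t+p_1+⋯+p_{t−1}, l_1−p_1, …, l_{t−1}−p_{t−1})` for (necessarily unique) integers
`0 ≤ p_i ≤ l_i` with `p_1+⋯+p_{t−1} ≤ k−l_t`, and `0` otherwise; `Π_{0,0}^{[k]}(a_0) = k!·a_0^k`. -/
noncomputable def PiMat {R : Type*} [CommRing R] (k t r : ℕ) (a : ℕ → R) :
    Matrix (GIdx k r t) (GIdx k r t) R :=
  Matrix.of fun α β =>
    if ht : 0 < t then
      ∑ p : Fin t → Fin (k + 1),
        if (∀ i : Fin t, i.val + 1 < t → (p i : ℕ) ≤ (α.1 i : ℕ)) ∧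
            (∀ i : Fin t, ¬ i.val + 1 < t → (p i : ℕ) = 0) ∧
            (α.1 ⟨t - 1, Nat.sub_lt ht one_pos⟩ : ℕ) + (∑ i, (p i : ℕ)) ≤ k ∧
            (β.1 ⟨0, ht⟩ : ℕ) = (α.1 ⟨t - 1, Nat.sub_lt ht one_pos⟩ : ℕ) + ∑ i, (p i : ℕ) ∧
            (∀ j : Fin t, 0 < j.val →
              (β.1 j : ℕ) =
                (α.1 ⟨j.val - 1, lt_of_le_of_lt (Nat.pred_le _) j.isLt⟩ : ℕ) -
                  (p ⟨j.val - 1, lt_of_le_of_lt (Nat.pred_le _) j.isLt⟩ : ℕ)) then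
          (Nat.factorial k : R) *
            (Nat.choose k ((α.1 ⟨t - 1, Nat.sub_lt ht one_pos⟩ : ℕ) + ∑ i, (p i : ℕ)) : R) *
            (∏ i : Fin t, if i.val + 1 < t then (Nat.choose (α.1 i : ℕ) (p i : ℕ) : R) else 1) *
            a 0 ^ (k - (α.1 ⟨t - 1, Nat.sub_lt ht one_pos⟩ : ℕ) - ∑ i, (p i : ℕ)) *
            (∏ i : Fin t, if i.val + 1 < t then a (i.val + 1) ^ (p i : ℕ) else 1) *
            a t ^ (α.1 ⟨t - 1, Nat.sub_lt ht one_pos⟩ : ℕ)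
        else 0
    else (Nat.factorial k : R) * a 0 ^ k

/-- weight of an index vector -/
def wt {k r t : ℕ} (α : GIdx k r t) : ℕ := ∑ i : Fin t, (t - 1 - i.val) * (α.1 i : ℕ)

lemma key_exp {k r t' : ℕ} (α β : GIdx k r (t' + 1)) (p : Fin (t' + 1) → Fin (k + 1))
    (h1 : ∀ i : Fin (t' + 1), i.val + 1 < t' + 1 → (p i : ℕ) ≤ (α.1 i : ℕ))
    (h2 : ∀ i : Fin (t' + 1), ¬ i.val + 1 < t' + 1 → (p i : ℕ) = 0)
    (h4 : (β.1 ⟨0, Nat.succ_pos t'⟩ : ℕ) = (α.1 (Fin.last t') : ℕ) + ∑ i, (p i : ℕ))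
    (h5 : ∀ j : Fin (t' + 1), 0 < j.val →
      (β.1 j : ℕ) = (α.1 ⟨j.val - 1, lt_of_le_of_lt (Nat.pred_le _) j.isLt⟩ : ℕ) -
        (p ⟨j.val - 1, lt_of_le_of_lt (Nat.pred_le _) j.isLt⟩ : ℕ)) :
    wt α + ((∑ i : Fin (t' + 1), (i.val + 1) * (p i : ℕ))
        + (t' + 1) * (α.1 (Fin.last t') : ℕ)) = r + wt β := by
  have hplast : (p (Fin.last t') : ℕ) = 0 := h2 (Fin.last t') (by simp [Fin.last])
  have hr : (∑ i, (α.1 i : ℕ)) = r := α.2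
  -- abbreviations
  set A : Fin t' → ℕ := fun i => (α.1 i.castSucc : ℕ) with hA
  set P : Fin t' → ℕ := fun i => (p i.castSucc : ℕ) with hP
  set L : ℕ := (α.1 (Fin.last t') : ℕ) with hL
  have hS : (∑ i, (p i : ℕ)) = ∑ i : Fin t', P i := by
    rw [Fin.sum_univ_castSucc, hplast, add_zero]
  have hwa : wt α = ∑ i : Fin t', (t' - i.val) * A i := by
    unfold wt
    rw [Fin.sum_univ_castSucc]
    simp [Fin.last]
    rfl
  have hwb : wt β = t' * (L + ∑ i : Fin t', P i)
      + ∑ j : Fin t', (t' - 1 - j.val) * (A j - P j) := by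
    unfold wt
    rw [Fin.sum_univ_succ]
    congr 1
    · simp only [Fin.val_zero, Nat.sub_zero, Nat.add_sub_cancel]
      rw [show (β.1 (0 : Fin (t' + 1)) : ℕ) = L + ∑ i : Fin t', P i by
        rw [← hS]; exact h4]
    · refine Finset.sum_congr rfl fun j _ => ?_
      have hj := h5 j.succ (by simp)
      have : (β.1 j.succ : ℕ) = A j - P j := by
        rw [hj]
        congr 1
      rw [this]
      congr 1
      have hv : (j.succ : ℕ) = j.val + 1 := rfl
      omega
  have hra : r = (∑ i : Fin t', A i) + L := by
    rw [← hr, Fin.sum_univ_castSucc]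
  have he : (∑ i : Fin (t' + 1), (i.val + 1) * (p i : ℕ))
      = ∑ i : Fin t', (i.val + 1) * P i := by
    rw [Fin.sum_univ_castSucc, hplast]
    simp
    rfl
  rw [hwa, hwb, hra, he]
  have hterm : ∀ i : Fin t',
      (t' - i.val) * A i + (i.val + 1) * P i
        = A i + (t' * P i + (t' - 1 - i.val) * (A i - P i)) := by
    intro i
    have hi : i.val < t' := i.isLt
    have hPA : P i ≤ A i := h1 i.castSucc (by simpa using i.isLt)
    have h1' : i.val ≤ t' := le_of_lt hi
    have h2' : i.val ≤ t' - 1 := by omega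
    have h3' : 1 ≤ t' := by omega
    zify [hPA, h1', h2', h3']
    ring
  calc (∑ i : Fin t', (t' - i.val) * A i)
        + ((∑ i : Fin t', (i.val + 1) * P i) + (t' + 1) * L)
      = (∑ i : Fin t', ((t' - i.val) * A i + (i.val + 1) * P i)) + (t' + 1) * L := by
        rw [Finset.sum_add_distrib]; ring
    _ = (∑ i : Fin t', (A i + (t' * P i + (t' - 1 - i.val) * (A i - P i)))) + (t' + 1) * L := by
        rw [Finset.sum_congr rfl fun i _ => hterm i]
    _ = ((∑ i : Fin t', A i) + ((t' * ∑ i : Fin t', P i)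
          + ∑ i : Fin t', (t' - 1 - i.val) * (A i - P i))) + (t' + 1) * L := by
        rw [Finset.sum_add_distrib, Finset.sum_add_distrib, Finset.mul_sum]
    _ = (∑ i : Fin t', A i) + L
        + (t' * (L + ∑ i : Fin t', P i) + ∑ j : Fin t', (t' - 1 - j.val) * (A j - P j)) := by
        ring

lemma entry_rel {R : Type*} [CommRing R] (k r t' : ℕ) (b : ℕ → R) (x : R)
    (α β : GIdx k r (t' + 1)) :
    x ^ wt α * PiMat k (t' + 1) r (fun i => b i * x ^ i) α β
      = x ^ (r + wt β) * PiMat k (t' + 1) r b α β := by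
  have ht : 0 < t' + 1 := Nat.succ_pos t'
  simp only [PiMat, Matrix.of_apply, dif_pos ht]
  rw [Finset.mul_sum, Finset.mul_sum]
  refine Finset.sum_congr rfl fun p _ => ?_
  split_ifs with h
  · obtain ⟨h1, h2, h3, h4, h5⟩ := h
    have e1 : (∏ i : Fin (t' + 1), if i.val + 1 < t' + 1 then
          (b (i.val + 1) * x ^ (i.val + 1)) ^ (p i : ℕ) else 1)
        = (∏ i : Fin (t' + 1), if i.val + 1 < t' + 1 then b (i.val + 1) ^ (p i : ℕ) else 1)
          * x ^ (∑ i : Fin (t' + 1), (i.val + 1) * (p i : ℕ)) := by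
      rw [← Finset.prod_pow_eq_pow_sum, ← Finset.prod_mul_distrib]
      refine Finset.prod_congr rfl fun i _ => ?_
      by_cases hc : i.val + 1 < t' + 1
      · rw [if_pos hc, if_pos hc, mul_pow, ← pow_mul]
      · rw [if_neg hc, if_neg hc, h2 i hc]
        simp
    have et : (b (t' + 1) * x ^ (t' + 1)) ^ (α.1 ⟨t' + 1 - 1, Nat.sub_lt ht one_pos⟩ : ℕ)
        = b (t' + 1) ^ (α.1 ⟨t' + 1 - 1, Nat.sub_lt ht one_pos⟩ : ℕ)
          * x ^ ((t' + 1) * (α.1 ⟨t' + 1 - 1, Nat.sub_lt ht one_pos⟩ : ℕ)) := by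
      rw [mul_pow, ← pow_mul]
    have e0 : (b 0 * x ^ (0 : ℕ)) = b 0 := by simp
    rw [e0, e1, et]
    have hlast : (⟨t' + 1 - 1, Nat.sub_lt ht one_pos⟩ : Fin (t' + 1)) = Fin.last t' := rfl
    have hE := key_exp α β p h1 h2 (by exact h4) h5
    rw [hlast] at *
    rw [← hE]
    ring
  · rw [mul_zero, mul_zero]

lemma pow_rel {R : Type*} [CommRing R] (k r t' : ℕ) (b : ℕ → R) (x : R) (n : ℕ)
    (α β : GIdx k r (t' + 1)) :
    x ^ wt α * ((PiMat k (t' + 1) r (fun i => b i * x ^ i)) ^ n) α β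
      = x ^ (r * n + wt β) * ((PiMat k (t' + 1) r b) ^ n) α β := by
  induction n generalizing α with
  | zero =>
    rcases eq_or_ne α β with rfl | hne
    · simp [Matrix.one_apply]
    · simp [Matrix.one_apply_ne hne]
  | succ n ih =>
    rw [pow_succ', pow_succ', Matrix.mul_apply, Matrix.mul_apply,
      Finset.mul_sum, Finset.mul_sum]
    refine Finset.sum_congr rfl fun γ _ => ?_
    calc x ^ wt α * (PiMat k (t' + 1) r (fun i => b i * x ^ i) α γ
            * ((PiMat k (t' + 1) r (fun i => b i * x ^ i)) ^ n) γ β)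
        = (x ^ wt α * PiMat k (t' + 1) r (fun i => b i * x ^ i) α γ)
            * ((PiMat k (t' + 1) r (fun i => b i * x ^ i)) ^ n) γ β := by ring
      _ = (x ^ (r + wt γ) * PiMat k (t' + 1) r b α γ)
            * ((PiMat k (t' + 1) r (fun i => b i * x ^ i)) ^ n) γ β := by
            rw [entry_rel]
      _ = x ^ r * PiMat k (t' + 1) r b α γ
            * (x ^ wt γ * ((PiMat k (t' + 1) r (fun i => b i * x ^ i)) ^ n) γ β) := by
            rw [pow_add]; ring
      _ = x ^ r * PiMat k (t' + 1) r b α γ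
            * (x ^ (r * n + wt β) * ((PiMat k (t' + 1) r b) ^ n) γ β) := by rw [ih]
      _ = x ^ (r * (n + 1) + wt β)
            * (PiMat k (t' + 1) r b α γ * ((PiMat k (t' + 1) r b) ^ n) γ β) := by
            rw [show r * (n + 1) + wt β = r + (r * n + wt β) by ring, pow_add, pow_add]
            ring

lemma diag_rel {R : Type*} [CommRing R] [IsDomain R] (k r t' : ℕ) (b : ℕ → R) (x : R)
    (hx : x ≠ 0) (n : ℕ) (α : GIdx k r (t' + 1)) :
    ((PiMat k (t' + 1) r (fun i => b i * x ^ i)) ^ n) α α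
      = x ^ (r * n) * ((PiMat k (t' + 1) r b) ^ n) α α := by
  have h := pow_rel k r t' b x n α α
  rw [pow_add] at h
  have hxw : (x : R) ^ wt α ≠ 0 := pow_ne_zero _ hx
  apply mul_left_cancel₀ hxw
  rw [h]; ring

theorem stmt13 (F : Type*) [Field F] [CharZero F] (k t r n : ℕ)
    (hk : 1 ≤ k) (ht : 1 ≤ t) (hn : 1 ≤ n) (hr : r ≤ k * t) :
    Matrix.trace
        ((PiMat k t r (fun i =>
          (if h : i ≤ t then
              (MvPolynomial.X (⟨i, by omega⟩ : Fin (t + 2)) : MvPolynomial (Fin (t + 2)) F)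
            else 0) *
            MvPolynomial.X (⟨t + 1, by omega⟩ : Fin (t + 2)) ^ i)) ^ n) =
      MvPolynomial.X (⟨t + 1, by omega⟩ : Fin (t + 2)) ^ (r * n) *
        Matrix.trace
          ((PiMat k t r (fun i =>
            if h : i ≤ t then
                (MvPolynomial.X (⟨i, by omega⟩ : Fin (t + 2)) : MvPolynomial (Fin (t + 2)) F)
              else 0)) ^ n) := by
  obtain ⟨t', rfl⟩ : ∃ t', t = t' + 1 := ⟨t - 1, by omega⟩
  set x : MvPolynomial (Fin (t' + 1 + 2)) F :=
    MvPolynomial.X (⟨t' + 1 + 1, by omega⟩ : Fin (t' + 1 + 2)) with hxdef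
  set b : ℕ → MvPolynomial (Fin (t' + 1 + 2)) F := fun i =>
    if h : i ≤ t' + 1 then
      (MvPolynomial.X (⟨i, by omega⟩ : Fin (t' + 1 + 2)) : MvPolynomial (Fin (t' + 1 + 2)) F)
    else 0 with hbdef
  have hx : x ≠ 0 := MvPolynomial.X_ne_zero _
  rw [Matrix.trace, Matrix.trace, Finset.mul_sum]
  refine Finset.sum_congr rfl fun α _ => ?_
  exact diag_rel k r t' b x hx n α
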